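/- Suppose that for every k ∈ ℕ, almost surely E[X_{k+1} | 𝒢_k] ≤ (1 + η_k)·X_k − u_k^{(T)} + ∑_{j=1}^{T−1} c_j·θ_k^{(j)}·Y_k^{(j)} + μ_k^{(T)}, and for each j = 1, …, T−1, almost surely E[Y_{k+1}^{(j)} | 𝒢_k] ≤ (1 − θ_k^{(j)})·Y_k^{(j)} − u_k^{(j)} + μ_k^{(j)}; and suppose that almost surely ∑_{k=0}^∞ η_k < ∞ and ∑_{k=0}^∞ μ_k^{(j)} < ∞ for every j = 1, …, T. Then almost surely: the sequence (X_k) converges to a finite limit; for each j = 1, …, T−1 the sequence (Y_k^{(j)}) converges to a finite limit; ∑_{j=1}^{T} ∑_{k=0}^∞ u_k^{(j)} < ∞; and ∑_{k=0}^∞ ∑_{j=1}^{T−1} c_j·θ_k^{(j)}·Y_k^{(j)} < ∞. -/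

import Mathlib

open MeasureTheory Filter

theorem robbins_siegmund {Ω : Type*} {m0 : MeasurableSpace Ω} (P : Measure Ω)
    [IsProbabilityMeasure P] (𝒢 : Filtration ℕ m0)
    (Z η A B : ℕ → Ω → ℝ)
    (hZ0 : ∀ k ω, 0 ≤ Z k ω) (hη0 : ∀ k ω, 0 ≤ η k ω)
    (hA0 : ∀ k ω, 0 ≤ A k ω) (hB0 : ∀ k ω, 0 ≤ B k ω)
    (hZi : ∀ k, Integrable (Z k) P) (hAi : ∀ k, Integrable (A k) P)
    (hBi : ∀ k, Integrable (B k) P)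
    (hZa : Adapted 𝒢 Z) (hηa : Adapted 𝒢 η) (hAa : Adapted 𝒢 A) (hBa : Adapted 𝒢 B)
    (hrec : ∀ k, ∀ᵐ ω ∂P, (P[Z (k + 1) | 𝒢 k]) ω ≤
      (1 + η k ω) * Z k ω - A k ω + B k ω)
    (hηsum : ∀ᵐ ω ∂P, Summable (fun k => η k ω))
    (hBsum : ∀ᵐ ω ∂P, Summable (fun k => B k ω)) :
    ∀ᵐ ω ∂P, (∃ l, Tendsto (fun k => Z k ω) atTop (nhds l)) ∧
      Summable (fun k => A k ω) := by
  classical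
  set Pr : ℕ → Ω → ℝ := fun k ω => ∏ i ∈ Finset.range k, (1 + η i ω) with hPrdef
  have hPrsucc : ∀ k ω, Pr (k + 1) ω = Pr k ω * (1 + η k ω) := by
    intro k ω
    simp only [hPrdef]
    exact Finset.prod_range_succ _ _
  have hPr1 : ∀ k ω, 1 ≤ Pr k ω := by
    intro k ω
    induction k with
    | zero => simp [hPrdef]
    | succ k ih => rw [hPrsucc]; nlinarith [hη0 k ω]
  have hPrpos : ∀ k ω, 0 < Pr k ω := fun k ω => lt_of_lt_of_le one_pos (hPr1 k ω)
  have hPrmono : ∀ ω, Monotone fun k => Pr k ω := by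
    intro ω
    apply monotone_nat_of_le_succ
    intro k
    rw [hPrsucc]
    nlinarith [hPrpos k ω, hη0 k ω]
  set α : ℕ → Ω → ℝ := fun k ω => (Pr k ω)⁻¹ with hαdef
  have hα0 : ∀ k ω, 0 < α k ω := fun k ω => inv_pos.2 (hPrpos k ω)
  have hα1 : ∀ k ω, α k ω ≤ 1 := fun k ω => inv_le_one_of_one_le₀ (hPr1 k ω)
  have hαm : ∀ n k, n ≤ k + 1 → Measurable[𝒢 k] (α n) := by
    intro n k hnk
    apply Measurable.inv
    apply Finset.measurable_prod
    intro i hi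
    have hik : i ≤ k := by have := Finset.mem_range.1 hi; omega
    exact measurable_const.add ((hηa i).mono (𝒢.mono hik) le_rfl)
  have hαm0 : ∀ n, Measurable (α n) := fun n =>
    ((hαm n n (by omega)).mono (𝒢.le n) le_rfl)
  have hZm0 : ∀ k, Measurable (Z k) := fun k =>
    (hZa k).mono (𝒢.le k) le_rfl
  have hAm0 : ∀ k, Measurable (A k) := fun k =>
    (hAa k).mono (𝒢.le k) le_rfl
  have hBm0 : ∀ k, Measurable (B k) := fun k =>
    (hBa k).mono (𝒢.le k) le_rfl
  -- the transformed process
  set W : ℕ → Ω → ℝ := fun k ω =>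
    α k ω * Z k ω + ∑ i ∈ Finset.range k, α (i + 1) ω * (A i ω - B i ω) with hWdef
  have hαZi : ∀ k, Integrable (fun ω => α k ω * Z k ω) P := by
    intro k
    refine Integrable.mono' (hZi k) (((hαm0 k).mul (hZm0 k)).aestronglyMeasurable) ?_
    refine Eventually.of_forall fun ω => ?_
    rw [Real.norm_eq_abs, abs_of_nonneg (mul_nonneg (hα0 k ω).le (hZ0 k ω))]
    exact mul_le_of_le_one_left (hZ0 k ω) (hα1 k ω)
  have hαABi : ∀ i, Integrable (fun ω => α (i + 1) ω * (A i ω - B i ω)) P := by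
    intro i
    refine Integrable.mono' ((hAi i).add (hBi i))
      (((hαm0 (i + 1)).mul ((hAm0 i).sub (hBm0 i))).aestronglyMeasurable) ?_
    refine Eventually.of_forall fun ω => ?_
    rw [Real.norm_eq_abs, abs_mul, abs_of_nonneg (hα0 (i + 1) ω).le]
    have h1 : |A i ω - B i ω| ≤ A i ω + B i ω :=
      abs_le.2 ⟨by linarith [hA0 i ω, hB0 i ω], by linarith [hA0 i ω, hB0 i ω]⟩
    calc α (i + 1) ω * |A i ω - B i ω| ≤ 1 * |A i ω - B i ω| := by
          apply mul_le_mul_of_nonneg_right (hα1 _ ω) (abs_nonneg _)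
      _ ≤ A i ω + B i ω := by rw [one_mul]; exact h1
  have hWi : ∀ k, Integrable (W k) P := by
    intro k
    exact (hαZi k).add (integrable_finset_sum _ fun i _ => hαABi i)
  have hWm : ∀ k, Measurable[𝒢 k] (W k) := by
    intro k
    apply Measurable.add
    · exact ((hαm k k (by omega)).mul ((hZa k)))
    · apply Finset.measurable_sum
      intro i hi
      have hik : i + 1 ≤ k := Finset.mem_range.1 hi
      exact ((hαm (i + 1) k (by omega)).mul
        (((hAa i).mono (𝒢.mono (by omega : i ≤ k)) le_rfl).sub
          ((hBa i).mono (𝒢.mono (by omega : i ≤ k)) le_rfl)))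
  have hWmj : ∀ k j, k ≤ j → Measurable[𝒢 j] (W k) := fun k j h =>
    (hWm k).mono (𝒢.mono h) le_rfl
  -- the supermartingale inequality for W
  have hWcond : ∀ k, (P[W (k + 1) | 𝒢 k]) ≤ᵐ[P] W k := by
    intro k
    have hsplit : W (k + 1) = (fun ω => α (k + 1) ω * Z (k + 1) ω) +
        fun ω => ∑ i ∈ Finset.range (k + 1), α (i + 1) ω * (A i ω - B i ω) := rfl
    have hsum_meas : StronglyMeasurable[𝒢 k]
        (fun ω => ∑ i ∈ Finset.range (k + 1), α (i + 1) ω * (A i ω - B i ω)) := by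
      apply Measurable.stronglyMeasurable
      apply Finset.measurable_sum
      intro i hi
      have hik : i ≤ k := by have := Finset.mem_range.1 hi; omega
      exact ((hαm (i + 1) k (by omega)).mul
        (((hAa i).mono (𝒢.mono hik) le_rfl).sub
          ((hBa i).mono (𝒢.mono hik) le_rfl)))
    have hsum_int : Integrable
        (fun ω => ∑ i ∈ Finset.range (k + 1), α (i + 1) ω * (A i ω - B i ω)) P :=
      integrable_finset_sum _ fun i _ => hαABi i
    have e1 : P[W (k + 1) | 𝒢 k] =ᵐ[P]
        P[(fun ω => α (k + 1) ω * Z (k + 1) ω) | 𝒢 k] +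
        P[(fun ω => ∑ i ∈ Finset.range (k + 1), α (i + 1) ω * (A i ω - B i ω)) | 𝒢 k] := by
      rw [hsplit]; exact condExp_add (hαZi (k + 1)) hsum_int (𝒢 k)
    have e2 : P[(fun ω => α (k + 1) ω * Z (k + 1) ω) | 𝒢 k] =ᵐ[P]
        α (k + 1) * P[Z (k + 1) | 𝒢 k] :=
      condExp_mul_of_stronglyMeasurable_left ((hαm (k + 1) k le_rfl).stronglyMeasurable)
        (hαZi (k + 1)) (hZi (k + 1))
    have e3 : P[(fun ω => ∑ i ∈ Finset.range (k + 1), α (i + 1) ω * (A i ω - B i ω)) | 𝒢 k]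
        = fun ω => ∑ i ∈ Finset.range (k + 1), α (i + 1) ω * (A i ω - B i ω) :=
      condExp_of_stronglyMeasurable (𝒢.le k) hsum_meas hsum_int
    filter_upwards [e1, e2, hrec k] with ω h1 h2 h3
    rw [h1, Pi.add_apply, h2, Pi.mul_apply, e3]
    simp only [hWdef, Finset.sum_range_succ]
    have hkey : α (k + 1) ω * (1 + η k ω) = α k ω := by
      have hne : (1 : ℝ) + η k ω ≠ 0 := ne_of_gt (by linarith [hη0 k ω])
      show (Pr (k + 1) ω)⁻¹ * (1 + η k ω) = (Pr k ω)⁻¹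
      rw [hPrsucc, mul_inv, mul_assoc, inv_mul_cancel₀ hne, mul_one]
    have h4 := mul_le_mul_of_nonneg_left h3 (hα0 (k + 1) ω).le
    have h5 : α (k + 1) ω * ((1 + η k ω) * Z k ω - A k ω + B k ω)
        = α k ω * Z k ω - α (k + 1) ω * A k ω + α (k + 1) ω * B k ω := by
      rw [← hkey]; ring
    linarith [h4, h5]
  -- the predictable compensator of the B-part
  set C : ℕ → Ω → ℝ := fun k ω => ∑ i ∈ Finset.range k, α (i + 1) ω * B i ω with hCdef
  have hC0 : ∀ k ω, 0 ≤ C k ω := by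
    intro k ω
    simp only [hCdef]
    exact Finset.sum_nonneg fun i _ => mul_nonneg (hα0 _ ω).le (hB0 i ω)
  have hCsucc : ∀ k ω, C (k + 1) ω = C k ω + α (k + 1) ω * B k ω := by
    intro k ω
    simp only [hCdef]
    exact Finset.sum_range_succ _ _
  have hCmono : ∀ ω, Monotone fun k => C k ω := by
    intro ω
    apply monotone_nat_of_le_succ
    intro k
    rw [hCsucc]
    nlinarith [hα0 (k + 1) ω, hB0 k ω]
  have hCm : ∀ n k, n ≤ k + 1 → Measurable[𝒢 k] (C n) := by
    intro n k hnk
    apply Finset.measurable_sum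
    intro i hi
    have hik : i ≤ k := by have := Finset.mem_range.1 hi; omega
    exact (hαm (i + 1) k (by omega)).mul ((hBa i).mono (𝒢.mono hik) le_rfl)
  have hCm0 : ∀ n, Measurable (C n) := fun n =>
    ((hCm n n (by omega)).mono (𝒢.le n) le_rfl)
  have hWlb : ∀ k ω, -(C k ω) ≤ W k ω := by
    intro k ω
    have h1 : 0 ≤ α k ω * Z k ω := mul_nonneg (hα0 k ω).le (hZ0 k ω)
    have h2 : (0:ℝ) ≤ ∑ i ∈ Finset.range k, α (i + 1) ω * A i ω :=
      Finset.sum_nonneg fun i _ => mul_nonneg (hα0 _ ω).le (hA0 i ω)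
    have h3 : W k ω = α k ω * Z k ω + ((∑ i ∈ Finset.range k, α (i + 1) ω * A i ω) - C k ω) := by
      simp only [hWdef, hCdef, mul_sub, Finset.sum_sub_distrib]
    rw [h3]
    linarith
  have hW00 : ∀ ω, W 0 ω = Z 0 ω := by
    intro ω
    simp [hWdef, hαdef, hPrdef]
  -- the key convergence statement, given a uniform bound on C
  have key : ∀ n : ℕ, ∀ᵐ ω ∂P, (∀ k, C k ω ≤ (n : ℝ)) →
      ∃ l, Tendsto (fun k => W k ω) atTop (nhds l) := by
    intro n
    set U : ℕ → Ω → ℝ := fun k ω => W 0 ω + ∑ i ∈ Finset.range k,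
      (if C (i + 1) ω ≤ (n : ℝ) then W (i + 1) ω - W i ω else 0) with hUdef
    have hUsucc : ∀ k ω, U (k + 1) ω = U k ω +
        (if C (k + 1) ω ≤ (n : ℝ) then W (k + 1) ω - W k ω else 0) := by
      intro k ω
      simp only [hUdef, Finset.sum_range_succ]
      ring
    have hUa : Adapted 𝒢 U := by
      intro k
      apply Measurable.add
      · exact hWmj 0 k (Nat.zero_le k)
      · apply Finset.measurable_sum
        intro i hi
        have hik : i + 1 ≤ k := Finset.mem_range.1 hi
        exact Measurable.ite
          (measurableSet_le (hCm (i + 1) k (by omega)) measurable_const)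
          ((hWmj (i + 1) k hik).sub (hWmj i k (by omega)))
          measurable_const
    have hUi : ∀ k, Integrable (U k) P := by
      intro k
      apply (hWi 0).add
      apply integrable_finset_sum
      intro i _
      have heq : (fun ω => if C (i + 1) ω ≤ (n : ℝ) then W (i + 1) ω - W i ω else 0)
          = Set.indicator {ω | C (i + 1) ω ≤ (n : ℝ)} (fun ω => W (i + 1) ω - W i ω) := by
        funext ω
        simp [Set.indicator_apply]
      rw [heq]
      exact Integrable.indicator ((hWi (i + 1)).sub (hWi i))
        (measurableSet_le (hCm0 (i + 1)) measurable_const)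
    -- supermartingale property of U
    have hUcond : ∀ k, (P[U (k + 1) | 𝒢 k]) ≤ᵐ[P] U k := by
      intro k
      set G : Ω → ℝ := fun ω => if C (k + 1) ω ≤ (n : ℝ) then (1 : ℝ) else 0 with hGdef
      have hG0 : ∀ ω, 0 ≤ G ω := by
        intro ω; simp only [hGdef]; split <;> norm_num
      have hGm : Measurable[𝒢 k] G :=
        Measurable.ite (measurableSet_le (hCm (k + 1) k le_rfl) measurable_const)
          measurable_const measurable_const
      have hGm0 : Measurable G := hGm.mono (𝒢.le k) le_rfl
      have hsplit : U (k + 1) = U k + G * (fun ω => W (k + 1) ω - W k ω) := by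
        funext ω
        rw [hUsucc, Pi.add_apply, Pi.mul_apply]
        simp only [hGdef]
        split <;> ring
      have hGWi : Integrable (G * fun ω => W (k + 1) ω - W k ω) P := by
        refine Integrable.mono' ((hWi (k + 1)).sub (hWi k)).norm
          ((hGm0.mul ((hWm (k+1)).mono (𝒢.le (k+1)) le_rfl |>.sub
            ((hWm k).mono (𝒢.le k) le_rfl))).aestronglyMeasurable) ?_
        refine Eventually.of_forall fun ω => ?_
        rw [Pi.mul_apply, Real.norm_eq_abs, abs_mul]
        have : |G ω| ≤ 1 := by simp only [hGdef]; split <;> norm_num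
        calc |G ω| * |W (k + 1) ω - W k ω| ≤ 1 * |W (k + 1) ω - W k ω| :=
              mul_le_mul_of_nonneg_right this (abs_nonneg _)
          _ = ‖(W (k + 1) - W k) ω‖ := by rw [one_mul]; rfl
      have e1 : P[U (k + 1) | 𝒢 k] =ᵐ[P]
          P[U k | 𝒢 k] + P[G * fun ω => W (k + 1) ω - W k ω | 𝒢 k] := by
        rw [hsplit]; exact condExp_add (hUi k) hGWi (𝒢 k)
      have e2 : P[U k | 𝒢 k] = U k :=
        condExp_of_stronglyMeasurable (𝒢.le k) (hUa k).stronglyMeasurable (hUi k)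
      have e3 : P[G * fun ω => W (k + 1) ω - W k ω | 𝒢 k] =ᵐ[P]
          G * P[fun ω => W (k + 1) ω - W k ω | 𝒢 k] :=
        condExp_mul_of_stronglyMeasurable_left hGm.stronglyMeasurable hGWi
          ((hWi (k + 1)).sub (hWi k))
      have e4 : P[fun ω => W (k + 1) ω - W k ω | 𝒢 k] =ᵐ[P]
          P[W (k + 1) | 𝒢 k] - P[W k | 𝒢 k] :=
        condExp_sub (hWi (k + 1)) (hWi k) (𝒢 k)
      have e5 : P[W k | 𝒢 k] = W k :=
        condExp_of_stronglyMeasurable (𝒢.le k) (hWm k).stronglyMeasurable (hWi k)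
      filter_upwards [e1, e3, e4, hWcond k] with ω h1 h3 h4 h5
      rw [h1, Pi.add_apply, e2, h3, Pi.mul_apply, h4, Pi.sub_apply, e5]
      have : G ω * ((P[W (k + 1) | 𝒢 k]) ω - W k ω) ≤ 0 :=
        mul_nonpos_of_nonneg_of_nonpos (hG0 ω) (by linarith)
      linarith
    have hUsuper : Supermartingale U 𝒢 P := supermartingale_nat hUa.stronglyAdapted hUi hUcond
    -- invariant : U = W while C stays below n, and U is bounded below by -n
    have hUinv : ∀ ω k, (C k ω ≤ (n : ℝ) → U k ω = W k ω) ∧ -(n : ℝ) ≤ U k ω := by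
      intro ω k
      induction k with
      | zero =>
        constructor
        · intro _
          simp [hUdef]
        · have h1 := hWlb 0 ω
          have h2 : C 0 ω = 0 := by simp [hCdef]
          have h3 : U 0 ω = W 0 ω := by simp [hUdef]
          have h4 : (0:ℝ) ≤ (n : ℝ) := Nat.cast_nonneg n
          rw [h3]; linarith
      | succ k ih =>
        by_cases h : C (k + 1) ω ≤ (n : ℝ)
        · have hk : C k ω ≤ (n : ℝ) := le_trans (hCmono ω (Nat.le_succ k)) h
          have hU1 : U (k + 1) ω = W (k + 1) ω := by
            rw [hUsucc, if_pos h, ih.1 hk]; ring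
          refine ⟨fun _ => hU1, ?_⟩
          rw [hU1]
          have := hWlb (k + 1) ω
          linarith
        · constructor
          · intro hcontra; exact absurd hcontra h
          · rw [hUsucc, if_neg h, add_zero]
            exact ih.2
    -- L¹ boundedness
    have hUexp : ∀ k, ∫ ω, U k ω ∂P ≤ ∫ ω, Z 0 ω ∂P := by
      intro k
      have h1 := hUsuper.setIntegral_le (Nat.zero_le k) (MeasurableSet.univ)
      rw [setIntegral_univ, setIntegral_univ] at h1
      have h2 : U 0 = fun ω => Z 0 ω := by
        funext ω
        rw [show U 0 ω = W 0 ω from by simp [hUdef], hW00]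
      rw [h2] at h1
      exact h1
    set R : NNReal := ((∫ ω, Z 0 ω ∂P) + 2 * n).toNNReal with hRdef
    have hbdd : ∀ k, eLpNorm (U k) 1 P ≤ (R : ENNReal) := by
      intro k
      have h1 : ∀ ω, ‖U k ω‖ ≤ ‖U k ω + 2 * n‖ := by
        intro ω
        have h2 := (hUinv ω k).2
        rw [Real.norm_eq_abs, Real.norm_eq_abs,
          abs_of_nonneg (by linarith : (0:ℝ) ≤ U k ω + 2 * n)]
        rw [abs_le]
        constructor <;> linarith [Nat.cast_nonneg (α := ℝ) n]
      have hint : Integrable (fun ω => U k ω + 2 * n) P :=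
        (hUi k).add (integrable_const _)
      calc eLpNorm (U k) 1 P ≤ eLpNorm (fun ω => U k ω + 2 * n) 1 P := eLpNorm_mono h1
        _ = ENNReal.ofReal (∫ ω, (U k ω + 2 * n) ∂P) := by
            rw [eLpNorm_one_eq_lintegral_enorm,
              ofReal_integral_eq_lintegral_ofReal hint
                (Eventually.of_forall fun ω => by
                  simp only [Pi.zero_apply]
                  have := (hUinv ω k).2
                  have := Nat.cast_nonneg (α := ℝ) n
                  linarith)]
            refine lintegral_congr fun ω => ?_
            rw [← Real.enorm_eq_ofReal (by
              have := (hUinv ω k).2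
              have := Nat.cast_nonneg (α := ℝ) n
              linarith : (0:ℝ) ≤ U k ω + 2 * n)]
        _ ≤ (R : ENNReal) := by
            rw [hRdef]
            refine le_trans (ENNReal.ofReal_le_ofReal ?_) (le_refl _)
            rw [integral_add (hUi k) (integrable_const _), integral_const]
            simp only [measure_univ, ENNReal.toReal_one, probReal_univ, smul_eq_mul, one_mul]
            linarith [hUexp k]
    have hUsub : Submartingale (-U) 𝒢 P := hUsuper.neg
    have hbdd' : ∀ k, eLpNorm ((-U) k) 1 P ≤ (R : ENNReal) := by
      intro k
      rw [show (-U) k = -(U k) from rfl, eLpNorm_neg]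
      exact hbdd k
    filter_upwards [hUsub.exists_ae_tendsto_of_bdd hbdd'] with ω h hCle
    obtain ⟨cc, hcc⟩ := h
    refine ⟨-cc, ?_⟩
    have hWU : ∀ k, W k ω = U k ω := fun k => ((hUinv ω k).1 (hCle k)).symm
    have h2 : Tendsto (fun k => U k ω) atTop (nhds (-cc)) := by
      have h3 := hcc.neg
      simp only [Pi.neg_apply, neg_neg] at h3
      exact h3
    exact h2.congr fun k => (hWU k).symm
  -- the final pointwise argument
  filter_upwards [ae_all_iff.2 key, hηsum, hBsum] with ω hUk hη hB
  have hαB0 : ∀ i, 0 ≤ α (i + 1) ω * B i ω := fun i => mul_nonneg (hα0 _ ω).le (hB0 i ω)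
  have hBα : Summable (fun i => α (i + 1) ω * B i ω) :=
    Summable.of_nonneg_of_le hαB0 (fun i => mul_le_of_le_one_left (hB0 i ω) (hα1 _ ω)) hB
  set tB := ∑' i, α (i + 1) ω * B i ω with htB
  have hCle : ∀ k, C k ω ≤ ((⌈tB⌉₊ : ℕ) : ℝ) := by
    intro k
    have h1 : C k ω = ∑ i ∈ Finset.range k, α (i + 1) ω * B i ω := by simp [hCdef]
    rw [h1]
    exact le_trans (Summable.sum_le_tsum _ (fun i _ => hαB0 i) hBα) (Nat.le_ceil _)
  obtain ⟨l, hl⟩ := hUk ⌈tB⌉₊ hCle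
  have hCconv : Tendsto (fun k => C k ω) atTop (nhds tB) := by
    refine hBα.hasSum.tendsto_sum_nat.congr fun k => ?_
    simp [hCdef]
  have hVconv : Tendsto (fun k => W k ω + C k ω) atTop (nhds (l + tB)) := hl.add hCconv
  have hVeq : ∀ k, W k ω + C k ω
      = α k ω * Z k ω + ∑ i ∈ Finset.range k, α (i + 1) ω * A i ω := by
    intro k
    simp only [hWdef, hCdef, mul_sub, Finset.sum_sub_distrib]
    ring
  have hαA0 : ∀ i, 0 ≤ α (i + 1) ω * A i ω := fun i => mul_nonneg (hα0 _ ω).le (hA0 i ω)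
  obtain ⟨b, hb⟩ := hVconv.bddAbove_range
  have hAα : Summable (fun i => α (i + 1) ω * A i ω) := by
    apply summable_of_sum_range_le hαA0
    intro k
    have h1 : 0 ≤ α k ω * Z k ω := mul_nonneg (hα0 _ ω).le (hZ0 k ω)
    have h2 : W k ω + C k ω ≤ b := hb ⟨k, rfl⟩
    have h3 := hVeq k
    linarith
  have hαZconv : Tendsto (fun k => α k ω * Z k ω) atTop
      (nhds (l + tB - ∑' i, α (i + 1) ω * A i ω)) := by
    refine (hVconv.sub hAα.hasSum.tendsto_sum_nat).congr fun k => ?_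
    rw [hVeq k]
    ring
  have hPrb : ∀ k, Pr k ω ≤ Real.exp (∑' i, η i ω) := by
    intro k
    have h1 : Pr k ω ≤ ∏ i ∈ Finset.range k, Real.exp (η i ω) := by
      simp only [hPrdef]
      apply Finset.prod_le_prod
      · intro i _; linarith [hη0 i ω]
      · intro i _; linarith [Real.add_one_le_exp (η i ω)]
    rw [← Real.exp_sum] at h1
    exact le_trans h1 (Real.exp_le_exp.2 (Summable.sum_le_tsum _ (fun i _ => hη0 i ω) hη))
  have hPrbdd : BddAbove (Set.range fun k => Pr k ω) := by
    refine ⟨Real.exp (∑' i, η i ω), ?_⟩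
    rintro x ⟨k, rfl⟩
    exact hPrb k
  have hPrconv : Tendsto (fun k => Pr k ω) atTop (nhds (⨆ k, Pr k ω)) :=
    tendsto_atTop_ciSup (hPrmono ω) hPrbdd
  set p := ⨆ k, Pr k ω with hpdef
  have hp1 : 1 ≤ p := by
    have h1 : Pr 0 ω ≤ p := le_ciSup hPrbdd 0
    have h2 : Pr 0 ω = 1 := by simp [hPrdef]
    linarith
  constructor
  · refine ⟨(l + tB - ∑' i, α (i + 1) ω * A i ω) * p, ?_⟩
    refine (hαZconv.mul hPrconv).congr fun k => ?_
    show α k ω * Z k ω * Pr k ω = Z k ω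
    have hne := ne_of_gt (hPrpos k ω)
    show (Pr k ω)⁻¹ * Z k ω * Pr k ω = Z k ω
    rw [mul_comm ((Pr k ω)⁻¹) (Z k ω), mul_assoc, inv_mul_cancel₀ hne, mul_one]
  · have hPrle : ∀ k, Pr k ω ≤ p := fun k => (hPrmono ω).ge_of_tendsto hPrconv k
    refine Summable.of_nonneg_of_le (fun i => hA0 i ω) (fun i => ?_) (hAα.mul_right p)
    have hne := ne_of_gt (hPrpos (i + 1) ω)
    have h1 : A i ω = α (i + 1) ω * A i ω * Pr (i + 1) ω := by
      show A i ω = (Pr (i + 1) ω)⁻¹ * A i ω * Pr (i + 1) ω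
      rw [mul_comm ((Pr (i + 1) ω)⁻¹) (A i ω), mul_assoc, inv_mul_cancel₀ hne, mul_one]
    calc A i ω = α (i + 1) ω * A i ω * Pr (i + 1) ω := h1
      _ ≤ α (i + 1) ω * A i ω * p := mul_le_mul_of_nonneg_left (hPrle (i + 1)) (hαA0 i)

theorem stmt_0 {Ω : Type*} {m0 : MeasurableSpace Ω} (P : Measure Ω) [IsProbabilityMeasure P]
    (𝒢 : Filtration ℕ m0)
    (T : ℕ) (hT : 2 ≤ T)
    (c : ℕ → ℝ) (hc : ∀ j ∈ Finset.Icc 1 (T - 1), 0 < c j)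
    (X η : ℕ → Ω → ℝ)
    (u μ : ℕ → ℕ → Ω → ℝ)   -- u j k, μ j k for levels j = 1, …, T
    (Y θ : ℕ → ℕ → Ω → ℝ)   -- Y j k, θ j k for levels j = 1, …, T − 1
    -- nonnegativity
    (hX0 : ∀ k ω, 0 ≤ X k ω) (hη0 : ∀ k ω, 0 ≤ η k ω)
    (hu0 : ∀ j ∈ Finset.Icc 1 T, ∀ k ω, 0 ≤ u j k ω)
    (hμ0 : ∀ j ∈ Finset.Icc 1 T, ∀ k ω, 0 ≤ μ j k ω)
    (hY0 : ∀ j ∈ Finset.Icc 1 (T - 1), ∀ k ω, 0 ≤ Y j k ω)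
    (hθ0 : ∀ j ∈ Finset.Icc 1 (T - 1), ∀ k ω, 0 ≤ θ j k ω)
    -- integrability
    (hXi : ∀ k, Integrable (X k) P) (hηi : ∀ k, Integrable (η k) P)
    (hui : ∀ j ∈ Finset.Icc 1 T, ∀ k, Integrable (u j k) P)
    (hμi : ∀ j ∈ Finset.Icc 1 T, ∀ k, Integrable (μ j k) P)
    (hYi : ∀ j ∈ Finset.Icc 1 (T - 1), ∀ k, Integrable (Y j k) P)
    (hθi : ∀ j ∈ Finset.Icc 1 (T - 1), ∀ k, Integrable (θ j k) P)
    (hθYi : ∀ j ∈ Finset.Icc 1 (T - 1), ∀ k,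
      Integrable (fun ω => θ j k ω * Y j k ω) P)
    (hηXi : ∀ k, Integrable (fun ω => η k ω * X k ω) P)
    -- adaptedness to the filtration
    (hXa : Adapted 𝒢 X) (hηa : Adapted 𝒢 η)
    (hua : ∀ j ∈ Finset.Icc 1 T, Adapted 𝒢 (u j))
    (hμa : ∀ j ∈ Finset.Icc 1 T, Adapted 𝒢 (μ j))
    (hYa : ∀ j ∈ Finset.Icc 1 (T - 1), Adapted 𝒢 (Y j))
    (hθa : ∀ j ∈ Finset.Icc 1 (T - 1), Adapted 𝒢 (θ j))
    -- the supermartingale-type conditional-expectation inequalities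
    (hXrec : ∀ k, ∀ᵐ ω ∂P, (P[X (k + 1) | 𝒢 k]) ω ≤
      (1 + η k ω) * X k ω - u T k ω
        + (∑ j ∈ Finset.Icc 1 (T - 1), c j * θ j k ω * Y j k ω) + μ T k ω)
    (hYrec : ∀ j ∈ Finset.Icc 1 (T - 1), ∀ k, ∀ᵐ ω ∂P,
      (P[Y j (k + 1) | 𝒢 k]) ω ≤ (1 - θ j k ω) * Y j k ω - u j k ω + μ j k ω)
    -- almost sure summability of η and of the μ's
    (hηsum : ∀ᵐ ω ∂P, Summable (fun k => η k ω))
    (hμsum : ∀ j ∈ Finset.Icc 1 T, ∀ᵐ ω ∂P, Summable (fun k => μ j k ω)) :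
    ∀ᵐ ω ∂P,
      (∃ l : ℝ, Tendsto (fun k => X k ω) atTop (nhds l)) ∧
      (∀ j ∈ Finset.Icc 1 (T - 1), ∃ l : ℝ,
        Tendsto (fun k => Y j k ω) atTop (nhds l)) ∧
      (∀ j ∈ Finset.Icc 1 T, Summable (fun k => u j k ω)) ∧
      Summable (fun k => ∑ j ∈ Finset.Icc 1 (T - 1), c j * θ j k ω * Y j k ω) := by
  classical
  set s : Finset ℕ := Finset.Icc 1 (T - 1) with hsdef
  have hTmem : T ∈ Finset.Icc 1 T := Finset.mem_Icc.2 ⟨by omega, le_rfl⟩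
  have hjT : ∀ j ∈ s, j ∈ Finset.Icc 1 T := by
    intro j hj
    have := Finset.mem_Icc.1 hj
    exact Finset.mem_Icc.2 ⟨this.1, by omega⟩
  -- the combined process
  set S : ℕ → Ω → ℝ := fun k ω => X k ω + ∑ j ∈ s, c j * Y j k ω with hSdef
  set Au : ℕ → Ω → ℝ := fun k ω => u T k ω + ∑ j ∈ s, c j * u j k ω with hAudef
  set Bμ : ℕ → Ω → ℝ := fun k ω => μ T k ω + ∑ j ∈ s, c j * μ j k ω with hBμdef
  have hS0 : ∀ k ω, 0 ≤ S k ω := by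
    intro k ω
    simp only [hSdef]
    have := Finset.sum_nonneg fun j hj => mul_nonneg (hc j hj).le (hY0 j hj k ω)
    linarith [hX0 k ω]
  have hAu0 : ∀ k ω, 0 ≤ Au k ω := by
    intro k ω
    simp only [hAudef]
    have := Finset.sum_nonneg fun j hj => mul_nonneg (hc j hj).le (hu0 j (hjT j hj) k ω)
    linarith [hu0 T hTmem k ω]
  have hBμ0 : ∀ k ω, 0 ≤ Bμ k ω := by
    intro k ω
    simp only [hBμdef]
    have := Finset.sum_nonneg fun j hj => mul_nonneg (hc j hj).le (hμ0 j (hjT j hj) k ω)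
    linarith [hμ0 T hTmem k ω]
  have hSi : ∀ k, Integrable (S k) P := fun k =>
    (hXi k).add (integrable_finset_sum _ fun j hj => (hYi j hj k).const_mul (c j))
  have hAui : ∀ k, Integrable (Au k) P := fun k =>
    (hui T hTmem k).add (integrable_finset_sum _ fun j hj =>
      (hui j (hjT j hj) k).const_mul (c j))
  have hBμi : ∀ k, Integrable (Bμ k) P := fun k =>
    (hμi T hTmem k).add (integrable_finset_sum _ fun j hj =>
      (hμi j (hjT j hj) k).const_mul (c j))
  have hSa : Adapted 𝒢 S := by
    intro k
    exact (hXa k).add (Finset.measurable_sum _ fun j hj =>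
      ((hYa j hj k).const_mul (c j)))
  have hAua : Adapted 𝒢 Au := by
    intro k
    exact (hua T hTmem k).add (Finset.measurable_sum _ fun j hj =>
      ((hua j (hjT j hj) k).const_mul (c j)))
  have hBμa : Adapted 𝒢 Bμ := by
    intro k
    exact (hμa T hTmem k).add (Finset.measurable_sum _ fun j hj =>
      ((hμa j (hjT j hj) k).const_mul (c j)))
  -- the recursion for S
  have hSrec : ∀ k, ∀ᵐ ω ∂P, (P[S (k + 1) | 𝒢 k]) ω ≤
      (1 + η k ω) * S k ω - Au k ω + Bμ k ω := by
    intro k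
    have hfun : (fun ω => ∑ j ∈ s, c j * Y j (k + 1) ω) = ∑ j ∈ s, c j • Y j (k + 1) := by
      funext ω
      simp [Finset.sum_apply]
    have hsum_int : Integrable (fun ω => ∑ j ∈ s, c j * Y j (k + 1) ω) P :=
      integrable_finset_sum _ fun j hj => (hYi j hj (k + 1)).const_mul (c j)
    have e1 : P[S (k + 1) | 𝒢 k] =ᵐ[P]
        P[X (k + 1) | 𝒢 k] + P[(fun ω => ∑ j ∈ s, c j * Y j (k + 1) ω) | 𝒢 k] := by
      have : S (k + 1) = X (k + 1) + fun ω => ∑ j ∈ s, c j * Y j (k + 1) ω := rfl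
      rw [this]
      exact condExp_add (hXi (k + 1)) hsum_int (𝒢 k)
    have e2 : P[(fun ω => ∑ j ∈ s, c j * Y j (k + 1) ω) | 𝒢 k] =ᵐ[P]
        ∑ j ∈ s, P[c j • Y j (k + 1) | 𝒢 k] := by
      rw [hfun]
      exact condExp_finset_sum (fun j hj => (hYi j hj (k + 1)).smul (c j)) (𝒢 k)
    have e3 : ∀ j ∈ s, P[c j • Y j (k + 1) | 𝒢 k] =ᵐ[P] c j • P[Y j (k + 1) | 𝒢 k] :=
      fun j _ => condExp_smul (c j) (Y j (k + 1)) (𝒢 k)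
    filter_upwards [e1, e2, (eventually_all_finset s).2 e3, hXrec k,
      (eventually_all_finset s).2 (fun j hj => hYrec j hj k)] with ω h1 h2 h3 h4 h5
    have hval : (P[S (k + 1) | 𝒢 k]) ω
        = (P[X (k + 1) | 𝒢 k]) ω + ∑ j ∈ s, c j * (P[Y j (k + 1) | 𝒢 k]) ω := by
      rw [h1, Pi.add_apply, h2, Finset.sum_apply]
      congr 1
      refine Finset.sum_congr rfl fun j hj => ?_
      rw [h3 j hj, Pi.smul_apply, smul_eq_mul]
    have hsum_le : ∑ j ∈ s, c j * (P[Y j (k + 1) | 𝒢 k]) ω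
        ≤ ∑ j ∈ s, c j * ((1 - θ j k ω) * Y j k ω - u j k ω + μ j k ω) :=
      Finset.sum_le_sum fun j hj =>
        mul_le_mul_of_nonneg_left (h5 j hj) (hc j hj).le
    have expand : ∑ j ∈ s, c j * ((1 - θ j k ω) * Y j k ω - u j k ω + μ j k ω)
        = (∑ j ∈ s, c j * Y j k ω) - (∑ j ∈ s, c j * θ j k ω * Y j k ω)
          - (∑ j ∈ s, c j * u j k ω) + (∑ j ∈ s, c j * μ j k ω) := by
      rw [← Finset.sum_sub_distrib, ← Finset.sum_sub_distrib, ← Finset.sum_add_distrib]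
      exact Finset.sum_congr rfl fun j _ => by ring
    have hYnn : 0 ≤ ∑ j ∈ s, c j * Y j k ω :=
      Finset.sum_nonneg fun j hj => mul_nonneg (hc j hj).le (hY0 j hj k ω)
    have hprod : 0 ≤ η k ω * ∑ j ∈ s, c j * Y j k ω := mul_nonneg (hη0 k ω) hYnn
    have hexp2 : (1 + η k ω) * S k ω = (1 + η k ω) * X k ω
        + (∑ j ∈ s, c j * Y j k ω) + η k ω * (∑ j ∈ s, c j * Y j k ω) := by
      simp only [hSdef]
      ring
    simp only [hAudef, hBμdef]
    rw [hval, hexp2]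
    linarith [hsum_le, expand, h4]
  -- apply Robbins–Siegmund to S
  have hBμsum : ∀ᵐ ω ∂P, Summable (fun k => Bμ k ω) := by
    filter_upwards [(eventually_all_finset (Finset.Icc 1 T)).2 hμsum] with ω h
    simp only [hBμdef]
    exact (h T hTmem).add (summable_sum fun j hj => ((h j (hjT j hj)).mul_left (c j)))
  have hSconc := robbins_siegmund P 𝒢 S η Au Bμ hS0 hη0 hAu0 hBμ0 hSi hAui hBμi
    hSa hηa hAua hBμa hSrec hηsum hBμsum
  -- apply Robbins–Siegmund to each Y j
  have hYconc : ∀ j ∈ s, ∀ᵐ ω ∂P,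
      (∃ l, Tendsto (fun k => Y j k ω) atTop (nhds l)) ∧
        Summable (fun k => θ j k ω * Y j k ω + u j k ω) := by
    intro j hj
    refine robbins_siegmund P 𝒢 (Y j) (fun _ _ => 0)
      (fun k ω => θ j k ω * Y j k ω + u j k ω) (μ j)
      (hY0 j hj) (fun _ _ => le_rfl)
      (fun k ω => add_nonneg (mul_nonneg (hθ0 j hj k ω) (hY0 j hj k ω)) (hu0 j (hjT j hj) k ω))
      (hμ0 j (hjT j hj)) (hYi j hj)
      (fun k => (hθYi j hj k).add (hui j (hjT j hj) k)) (hμi j (hjT j hj))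
      (hYa j hj) (fun _ => measurable_const)
      (fun k => id
        (((hθa j hj k).mul (hYa j hj k)).add
          (hua j (hjT j hj) k)))
      (hμa j (hjT j hj)) ?_ (Eventually.of_forall fun ω => summable_zero)
      (hμsum j (hjT j hj))
    intro k
    filter_upwards [hYrec j hj k] with ω h
    have : (1 - θ j k ω) * Y j k ω = Y j k ω - θ j k ω * Y j k ω := by ring
    linarith
  -- combine everything
  filter_upwards [hSconc, (eventually_all_finset s).2 hYconc] with ω h1 h2
  obtain ⟨⟨lS, hlS⟩, hAusum⟩ := h1
  have hθYsum : ∀ j ∈ s, Summable (fun k => θ j k ω * Y j k ω) := by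
    intro j hj
    refine Summable.of_nonneg_of_le
      (fun k => mul_nonneg (hθ0 j hj k ω) (hY0 j hj k ω))
      (fun k => le_add_of_nonneg_right (hu0 j (hjT j hj) k ω)) (h2 j hj).2
  refine ⟨?_, fun j hj => (h2 j hj).1, ?_, ?_⟩
  · -- convergence of X
    set L : ℕ → ℝ := fun j => if hj : j ∈ s then (h2 j hj).1.choose else 0 with hLdef
    have hsumY : Tendsto (fun k => ∑ j ∈ s, c j * Y j k ω) atTop
        (nhds (∑ j ∈ s, c j * L j)) := by
      refine tendsto_finset_sum s fun j hj => ?_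
      have hLj : L j = (h2 j hj).1.choose := by simp only [hLdef, dif_pos hj]
      rw [hLj]
      exact ((h2 j hj).1.choose_spec).const_mul (c j)
    refine ⟨lS - ∑ j ∈ s, c j * L j, ?_⟩
    refine (hlS.sub hsumY).congr fun k => ?_
    simp only [hSdef]
    ring
  · -- summability of u
    intro j hj
    rcases Finset.mem_Icc.1 hj with ⟨hj1, hj2⟩
    by_cases hjt : j = T
    · refine Summable.of_nonneg_of_le (fun k => hu0 j hj k ω) (fun k => ?_) hAusum
      rw [hjt]
      simp only [hAudef]
      have := Finset.sum_nonneg fun j hj => mul_nonneg (hc j hj).le (hu0 j (hjT j hj) k ω)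
      linarith
    · have hjs : j ∈ s := Finset.mem_Icc.2 ⟨hj1, by omega⟩
      refine Summable.of_nonneg_of_le (fun k => hu0 j hj k ω)
        (fun k => le_add_of_nonneg_left (mul_nonneg (hθ0 j hjs k ω) (hY0 j hjs k ω)))
        (h2 j hjs).2
  · -- summability of the weighted θY sums
    refine summable_sum fun j hj => ?_
    refine Summable.congr (Summable.mul_left (c j) (hθYsum j hj)) fun k => ?_
    ring
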